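/- Let K be a field of characteristic zero, n ≥ 4, and let D be a derivation of T(n) of the canonical form: D(N_{12}) = λ_1 N_{12} + c_1 N_{2n}, D(N_{j(j+1)}) = λ_j N_{j(j+1)} + c_j N_{1n} for 2 ≤ j ≤ n−2, D(N_{(n−1)n}) = λ_{n−1} N_{(n−1)n} + c_{n−1} N_{1(n−1)}, and D(N_{ik}) = (Σ_{p=i}^{k−1} λ_p) N_{ik} for k − i ≥ 2. If D has at least n−1 nonzero off-diagonal parameters, i.e., c_j ≠ 0 for all j = 1,…,n−1, and the form of D cannot be simplified further—meaning λ_1 = λ_2 + ⋯ + λ_{n−1}, λ_1 + ⋯ + λ_{n−1} = λ_j for 2 ≤ j ≤ n−2, and λ_1 + ⋯ + λ_{n−2} = λ_{n−1}—then λ_p = 0 for all p and D is nilpotent as a K-linear endomorphism of T(n). Consequently, a non-nilpotent derivation in canonical form has at most n−2 nonzero off-diagonal parameters. -/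

import Mathlib

open Matrix

attribute [local instance 100] LieRing.ofAssociativeRing

/-- The Lie algebra `T(n)` of strictly upper triangular `n × n` matrices over `K`. -/
def strictUpper (n : ℕ) (K : Type*) [Field K] :
    LieSubalgebra K (Matrix (Fin n) (Fin n) K) where
  carrier := {M | ∀ i j : Fin n, j ≤ i → M i j = 0}
  add_mem' := by
    intro a b ha hb i j hij
    simp [Matrix.add_apply, ha i j hij, hb i j hij]
  zero_mem' := by intro i j hij; simp
  smul_mem' := by
    intro c a ha i j hij
    simp [Matrix.smul_apply, ha i j hij]
  lie_mem' := by
    intro a b ha hb i j hij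
    have hmul : ∀ x y : Matrix (Fin n) (Fin n) K,
        (∀ i j : Fin n, j ≤ i → x i j = 0) → (∀ i j : Fin n, j ≤ i → y i j = 0) →
        (x * y) i j = 0 := by
      intro x y hx hy
      rw [Matrix.mul_apply]
      apply Finset.sum_eq_zero
      intro s _
      rcases le_or_gt s i with h | h
      · rw [hx i s h, zero_mul]
      · rw [hy s j (hij.trans h.le), mul_zero]
    rw [Ring.lie_def, Matrix.sub_apply, hmul a b ha hb, hmul b a hb ha, sub_zero]

/-- The standard basis element `N_{ik}` (with `i < k`) of `T(n)`. -/
def stdN {n : ℕ} {K : Type*} [Field K] {i k : Fin n} (h : i < k) :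
    strictUpper n K :=
  ⟨Matrix.single i k 1, by
    intro a b hba
    simp only [Matrix.single, Matrix.of_apply, ite_eq_right_iff, one_ne_zero]
    rintro ⟨rfl, rfl⟩
    exact absurd h (not_lt.mpr hba)⟩

/-- The basis element `N_{ik}` of `T(n)`, indexed by natural numbers (`0`-based). -/
def natN (n : ℕ) (K : Type*) [Field K] (i k : ℕ) (h1 : i < k) (h2 : k < n) :
    strictUpper n K :=
  stdN (i := ⟨i, h1.trans h2⟩) (k := ⟨k, h2⟩) (Fin.mk_lt_mk.mpr h1)

lemma strictUpper_decomp {n : ℕ} {K : Type*} [Field K] (x : strictUpper n K) :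
    x = ∑ p : Fin n × Fin n,
      if h : p.1 < p.2 then (x : Matrix (Fin n) (Fin n) K) p.1 p.2 • stdN h else 0 := by
  apply Subtype.ext
  rw [AddSubmonoidClass.coe_finset_sum]
  ext a b
  rw [Matrix.sum_apply]
  rw [show ((x : Matrix (Fin n) (Fin n) K)) a b
      = if a < b then (x : Matrix (Fin n) (Fin n) K) a b else 0 by
    split
    · rfl
    · exact x.2 a b (not_lt.mp (by assumption))]
  rw [Fintype.sum_eq_single (a, b)]
  · simp only [apply_dite (fun y : strictUpper n K => (y : Matrix (Fin n) (Fin n) K))]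
    split
    · rw [Submodule.coe_smul]
      simp [stdN, Matrix.single]
    · simp
  · rintro ⟨i, j⟩ hij
    simp only [apply_dite (fun y : strictUpper n K => (y : Matrix (Fin n) (Fin n) K))]
    split
    · rw [Submodule.coe_smul]
      have : ¬(i = a ∧ j = b) := by
        rintro ⟨rfl, rfl⟩; exact hij rfl
      simp [stdN, Matrix.single, this]
    · simp

/-- A derivation of $T(n)$ in canonical form whose $n-1$ off-diagonal parameters are all
nonzero, and whose diagonal parameters satisfy the system making all off-diagonal parameters
non-removable, has vanishing diagonal part and is nilpotent.
(Indices are $0$-based: $λ_p$, $c_p$ of the paper are `lam (p-1)`, `c (p-1)`.) -/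
theorem canonical_derivation_all_offdiag_nonzero_nilpotent
    (K : Type*) [Field K] [CharZero K] (n : ℕ) (hn : 4 ≤ n)
    (D : LieDerivation K (strictUpper n K) (strictUpper n K))
    (lam c : ℕ → K)
    (h1 : D (natN n K 0 1 (by omega) (by omega)) =
      lam 0 • natN n K 0 1 (by omega) (by omega) +
        c 0 • natN n K 1 (n - 1) (by omega) (by omega))
    (h2 : ∀ (j : ℕ) (hj1 : 1 ≤ j) (hj2 : j ≤ n - 3),
      D (natN n K j (j + 1) (by omega) (by omega)) =
        lam j • natN n K j (j + 1) (by omega) (by omega) +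
          c j • natN n K 0 (n - 1) (by omega) (by omega))
    (h3 : D (natN n K (n - 2) (n - 1) (by omega) (by omega)) =
      lam (n - 2) • natN n K (n - 2) (n - 1) (by omega) (by omega) +
        c (n - 2) • natN n K 0 (n - 2) (by omega) (by omega))
    (h4 : ∀ (i k : ℕ) (hik : i + 2 ≤ k) (hk : k < n),
      D (natN n K i k (by omega) hk) =
        (∑ p ∈ Finset.Ico i k, lam p) • natN n K i k (by omega) hk)
    (hc : ∀ j ≤ n - 2, c j ≠ 0)
    (hs1 : lam 0 = ∑ j ∈ Finset.Ico 1 (n - 1), lam j)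
    (hs2 : ∀ (j : ℕ), 1 ≤ j → j ≤ n - 3 → ∑ p ∈ Finset.range (n - 1), lam p = lam j)
    (hs3 : ∑ p ∈ Finset.range (n - 2), lam p = lam (n - 2)) :
    (∀ p ≤ n - 2, lam p = 0) ∧
      IsNilpotent (LieDerivation.toLinearMap D : Module.End K (strictUpper n K)) := by
  obtain ⟨m, rfl⟩ : ∃ m, n = m + 4 := ⟨n - 4, by omega⟩
  have hs1' : lam 0 = ∑ j ∈ Finset.Ico 1 (m + 3), lam j := hs1
  have hs2' : ∀ j, 1 ≤ j → j ≤ m + 1 →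
      (∑ p ∈ Finset.range (m + 3), lam p) = lam j := fun j a b => hs2 j a b
  have hs3' : (∑ p ∈ Finset.range (m + 2), lam p) = lam (m + 2) := hs3
  have emid : ∑ j ∈ Finset.Ico 1 (m + 2), lam j =
      ((m + 1 : ℕ) : K) * (∑ p ∈ Finset.range (m + 3), lam p) := by
    rw [Finset.sum_congr rfl (fun j hj =>
      (hs2' j (Finset.mem_Ico.mp hj).1
        (by have := (Finset.mem_Ico.mp hj).2; omega)).symm),
      Finset.sum_const, Nat.card_Ico, nsmul_eq_mul]
    norm_num
  have etop : ∑ j ∈ Finset.Ico 1 (m + 3), lam j =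
      (∑ j ∈ Finset.Ico 1 (m + 2), lam j) + lam (m + 2) :=
    Finset.sum_Ico_succ_top (by omega) lam
  have esplit : (∑ p ∈ Finset.range (m + 3), lam p) =
      lam 0 + ∑ j ∈ Finset.Ico 1 (m + 3), lam j := by
    rw [Finset.range_eq_Ico, ← Finset.sum_Ico_consecutive lam (Nat.zero_le 1) (by omega)]
    congr 1
    simp
  have e3 : (∑ p ∈ Finset.range (m + 3), lam p) = lam (m + 2) + lam (m + 2) := by
    rw [Finset.sum_range_succ, hs3']
  have h1' : lam 0 = ((m + 1 : ℕ) : K) * (∑ p ∈ Finset.range (m + 3), lam p) + lam (m + 2) := by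
    rw [hs1', etop, emid]
  have h2' : (∑ p ∈ Finset.range (m + 3), lam p) =
      lam 0 + (((m + 1 : ℕ) : K) * (∑ p ∈ Finset.range (m + 3), lam p) + lam (m + 2)) := by
    have h := esplit
    rw [etop, emid] at h
    exact h
  have hcS : ((m + 1 : ℕ) : K) * (∑ p ∈ Finset.range (m + 3), lam p) = 0 := by
    linear_combination (-(1 : K)/2) * h2' + (-(1 : K)/2) * h1' + ((1 : K)/2) * e3
  have hS0 : (∑ p ∈ Finset.range (m + 3), lam p) = 0 := by
    rcases mul_eq_zero.mp hcS with h | h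
    · exact absurd h (Nat.cast_ne_zero.mpr (by omega))
    · exact h
  have hb : lam (m + 2) = 0 := by
    have := e3; rw [hS0] at this; linear_combination (-(1 : K)/2) * this
  have ha : lam 0 = 0 := by
    have := h1'; rw [hS0, hb] at this; simpa using this
  have lamz : ∀ p ≤ m + 2, lam p = 0 := by
    intro p hp
    by_cases hp0 : p = 0
    · subst hp0; exact ha
    · by_cases hpm : p = m + 2
      · subst hpm; exact hb
      · rw [← hs2' p (by omega) (by omega), hS0]
  have hbig : ∀ (a b : ℕ) (p1 : a < b) (p2 : b < m + 4), a + 2 ≤ b →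
      D (natN (m + 4) K a b p1 p2) = 0 := by
    intro a b p1 p2 hab
    have e := h4 a b hab p2
    have hz : ∑ p ∈ Finset.Ico a b, lam p = 0 :=
      Finset.sum_eq_zero fun p hp => lamz p (by have := Finset.mem_Ico.mp hp; omega)
    rw [hz, zero_smul] at e
    exact e
  have hD2 : ∀ (a b : ℕ) (p1 : a < b) (p2 : b < m + 4),
      D (D (natN (m + 4) K a b p1 p2)) = 0 := by
    intro a b p1 p2
    by_cases hgap : a + 2 ≤ b
    · rw [hbig a b p1 p2 hgap, map_zero]
    · obtain rfl : b = a + 1 := by omega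
      by_cases ha0 : a = 0
      · subst ha0
        have e1' : D (natN (m + 4) K 0 1 p1 p2) =
            lam 0 • natN (m + 4) K 0 1 (by omega) (by omega) +
              c 0 • natN (m + 4) K 1 (m + 3) (by omega) (by omega) := h1
        rw [e1', map_add, _root_.map_smul, _root_.map_smul, lamz 0 (by omega),
          hbig 1 (m + 3) (by omega) (by omega) (by omega)]
        simp
      · by_cases ham : a = m + 2
        · subst ham
          have e1' : D (natN (m + 4) K (m + 2) (m + 3) p1 p2) =
              lam (m + 2) • natN (m + 4) K (m + 2) (m + 3) (by omega) (by omega) +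
                c (m + 2) • natN (m + 4) K 0 (m + 2) (by omega) (by omega) := h3
          rw [e1', map_add, _root_.map_smul, _root_.map_smul, lamz (m + 2) (by omega),
            hbig 0 (m + 2) (by omega) (by omega) (by omega)]
          simp
        · have e1' : D (natN (m + 4) K a (a + 1) p1 p2) =
              lam a • natN (m + 4) K a (a + 1) (by omega) (by omega) +
                c a • natN (m + 4) K 0 (m + 3) (by omega) (by omega) :=
            h2 a (by omega) (by omega)
          rw [e1', map_add, _root_.map_smul, _root_.map_smul, lamz a (by omega),
            hbig 0 (m + 3) (by omega) (by omega) (by omega)]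
          simp
  have hDD : ∀ x : strictUpper (m + 4) K, D (D x) = 0 := by
    intro x
    conv_lhs => rw [strictUpper_decomp x]
    rw [map_sum, map_sum]
    apply Finset.sum_eq_zero
    intro p _
    by_cases hp : p.1 < p.2
    · rw [dif_pos hp, _root_.map_smul, _root_.map_smul]
      have hz : D (D (stdN hp)) = 0 := hD2 p.1.val p.2.val hp p.2.isLt
      rw [hz, smul_zero]
    · rw [dif_neg hp, map_zero, map_zero]
  constructor
  · exact fun p hp => lamz p hp
  · refine ⟨2, ?_⟩
    ext x
    simp [pow_two, Module.End.mul_apply, hDD x]
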